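/- Let X₁ and X₂ be finite sets and X = X₁ ∪ X₂. Let z, z' ∈ Z(X) satisfy π_{X→X₁}(z) = π_{X→X₁}(z') and π_{X→X₂}(z) = π_{X→X₂}(z'). Then there exist vectors z = z₀, z₁, …, z_ℓ = z' in Z(X) such that for every k ∈ {1,…,ℓ}, ‖z_k - z_{k-1}‖₁ = 4, π_{X→X₁}(z_{k-1}) = π_{X→X₁}(z_k), and π_{X→X₂}(z_{k-1}) = π_{X→X₂}(z_k). Moreover, if z and z' are non-negative (all coordinates ≥ 0), the intermediate vectors z₀,…,z_ℓ can be chosen non-negative. -/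

import Mathlib

open Finset

/-- `ZL S` is the integral lattice with basis indexed by binary labelings of the
finite set `S`. -/
abbrev ZL {V : Type} (S : Finset V) : Type := ({x // x ∈ S} → Bool) → ℤ

/-- The projection `π_{S → T}` for `T ⊆ S`: the linear extension of `e_a ↦ e_{a|_T}`. -/
noncomputable def projZ {V : Type} [Fintype V] [DecidableEq V] {S T : Finset V}
    (h : T ⊆ S) (z : ZL S) : ZL T := fun b =>
  ∑ a : {x // x ∈ S} → Bool,
    if ∀ x : {x // x ∈ T}, a ⟨x.1, h x.2⟩ = b x then z a else 0

/-- The ℓ₁-norm on `ZL S` with respect to the standard basis. -/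
noncomputable def l1Z {V : Type} [Fintype V] [DecidableEq V] {S : Finset V}
    (z : ZL S) : ℤ := ∑ a, |z a|

section Helpers
set_option linter.unusedSectionVars false

variable {V : Type} [Fintype V] [DecidableEq V]

def res {S T : Finset V} (h : T ⊆ S) (a : {x // x ∈ S} → Bool) :
    {x // x ∈ T} → Bool := fun x => a ⟨x.1, h x.2⟩

lemma projZ_apply {S T : Finset V} (h : T ⊆ S) (z : ZL S) (b : {x // x ∈ T} → Bool) :
    projZ h z b = ∑ a, if res h a = b then z a else 0 := by
  simp [projZ, res, funext_iff]

lemma l1Z_nonneg {S : Finset V} (z : ZL S) : 0 ≤ l1Z z :=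
  Finset.sum_nonneg fun _ _ => abs_nonneg _

lemma eq_of_l1Z_nonpos {S : Finset V} {z z' : ZL S} (h : l1Z (z - z') ≤ 0) : z = z' := by
  have h0 : l1Z (z - z') = 0 := le_antisymm h (l1Z_nonneg _)
  have := (Finset.sum_eq_zero_iff_of_nonneg
    (fun a _ => abs_nonneg ((z - z') a))).mp h0
  funext a
  have := this a (mem_univ a)
  have : (z - z') a = 0 := abs_eq_zero.mp this
  simpa [sub_eq_zero] using this

lemma fiber_sum_eq {S T : Finset V} (h : T ⊆ S) {z z' : ZL S}
    (he : projZ h z = projZ h z') (b : {x // x ∈ T} → Bool) :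
    ∑ a, (if res h a = b then z a - z' a else 0) = 0 := by
  have hb := congrFun he b
  calc ∑ a, (if res h a = b then z a - z' a else 0)
      = ∑ a, ((if res h a = b then z a else 0) - (if res h a = b then z' a else 0)) := by
        refine Finset.sum_congr rfl fun a _ => ?_; split_ifs <;> simp
    _ = projZ h z b - projZ h z' b := by
        rw [Finset.sum_sub_distrib, projZ_apply, projZ_apply]
    _ = 0 := by rw [hb, sub_self]

lemma exists_neg_in_fiber {S T : Finset V} (h : T ⊆ S) {d : ({x // x ∈ S} → Bool) → ℤ}
    (hsum : ∀ b, ∑ a, (if res h a = b then d a else 0) = 0)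
    {a₀ : {x // x ∈ S} → Bool} (hpos : 0 < d a₀) :
    ∃ b, res h b = res h a₀ ∧ d b < 0 := by
  by_contra hc
  push_neg at hc
  have hnn : ∀ a ∈ Finset.univ, (0:ℤ) ≤ (if res h a = res h a₀ then d a else 0) := by
    intro a _; split_ifs with hh
    · exact hc a hh
    · exact le_refl 0
  have := (Finset.sum_eq_zero_iff_of_nonneg hnn).mp (hsum (res h a₀)) a₀ (mem_univ a₀)
  simp at this
  omega

lemma neg_fiber_sum {S T : Finset V} (h : T ⊆ S) {d : ({x // x ∈ S} → Bool) → ℤ}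
    (hsum : ∀ b, ∑ a, (if res h a = b then d a else 0) = 0) (b : {x // x ∈ T} → Bool) :
    ∑ a, (if res h a = b then -d a else 0) = 0 := by
  have : ∑ a, (if res h a = b then -d a else 0)
      = -∑ a, (if res h a = b then d a else 0) := by
    rw [← Finset.sum_neg_distrib]
    refine Finset.sum_congr rfl fun a _ => ?_
    split_ifs <;> simp
  rw [this, hsum b, neg_zero]

lemma point_eq {X₁ X₂ : Finset V} {a b : {x // x ∈ X₁ ∪ X₂} → Bool}
    (e1 : res subset_union_left a = res subset_union_left b)
    (e2 : res subset_union_right a = res subset_union_right b) : a = b := by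
  funext x
  obtain ⟨x, hx⟩ := x
  rcases Finset.mem_union.mp hx with h | h
  · exact congrFun e1 ⟨x, h⟩
  · exact congrFun e2 ⟨x, h⟩

lemma sum_filter_single {S : Finset V} (P : ({x // x ∈ S} → Bool) → Prop) [DecidablePred P]
    (b : {x // x ∈ S} → Bool) (v : ℤ) :
    ∑ u, (if P u then (if u = b then v else 0) else 0) = if P b then v else 0 := by
  have key : ∀ u, (if P u then (if u = b then v else 0) else 0)
      = if u = b then (if P b then v else 0) else 0 := by
    intro u
    by_cases h : u = b
    · subst h; simp
    · simp [h]
  simp only [key]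
  rw [Finset.sum_ite_eq' Finset.univ b]
  simp

lemma step_lemma {X₁ X₂ : Finset V} (z z' : ZL (X₁ ∪ X₂))
    (h1 : projZ subset_union_left z = projZ subset_union_left z')
    (h2 : projZ subset_union_right z = projZ subset_union_right z')
    (hne : z ≠ z') :
    ∃ z₁ : ZL (X₁ ∪ X₂),
      l1Z (z₁ - z) = 4 ∧
      projZ subset_union_left z = projZ subset_union_left z₁ ∧
      projZ subset_union_right z = projZ subset_union_right z₁ ∧
      l1Z (z₁ - z') + 2 ≤ l1Z (z - z') ∧
      ((∀ u, 0 ≤ z u) → (∀ u, 0 ≤ z' u) → ∀ u, 0 ≤ z₁ u) := by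
  set d : ({x // x ∈ X₁ ∪ X₂} → Bool) → ℤ := fun u => z u - z' u with hd
  have hd1 : ∀ b, ∑ a, (if res subset_union_left a = b then d a else 0) = 0 :=
    fun b => fiber_sum_eq _ h1 b
  have hd2 : ∀ b, ∑ a, (if res subset_union_right a = b then d a else 0) = 0 :=
    fun b => fiber_sum_eq _ h2 b
  -- a point with positive d
  have hexa : ∃ a, 0 < d a := by
    have : ∃ u, d u ≠ 0 := by
      by_contra hcon
      push_neg at hcon
      exact hne (funext fun u => by have := hcon u; simp [hd] at this; omega)
    obtain ⟨u, hu⟩ := this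
    rcases lt_or_gt_of_ne hu with hlt | hgt
    · have hneg : 0 < -d u := by omega
      obtain ⟨b, _, hb⟩ := exists_neg_in_fiber subset_union_left
        (neg_fiber_sum subset_union_left hd1) hneg
      exact ⟨b, by omega⟩
    · exact ⟨u, hgt⟩
  obtain ⟨a, ha⟩ := hexa
  obtain ⟨b, hrb, hb⟩ := exists_neg_in_fiber subset_union_left hd1 ha
  have hbneg : 0 < -d b := by omega
  obtain ⟨c, hrc, hcneg⟩ := exists_neg_in_fiber subset_union_right
    (neg_fiber_sum subset_union_right hd2) hbneg
  have hc : 0 < d c := by omega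
  -- res-versions: hrb : res₁ b = res₁ a, hrc : res₂ c = res₂ b
  -- the fourth corner
  set w : ({x // x ∈ X₁ ∪ X₂} → Bool) := fun x => if x.1 ∈ X₁ then c x else a x with hwdef
  have hrw1 : res subset_union_left w = res (T := X₁) subset_union_left c := by
    funext x
    simp [res, hwdef, x.2]
  have hrw2 : res subset_union_right w = res (T := X₂) subset_union_right a := by
    funext x
    simp only [res, hwdef]
    split_ifs with h
    · have e1 := congrFun hrc ⟨x.1, x.2⟩
      have e2 := congrFun hrb ⟨x.1, h⟩
      exact e1.trans e2
    · rfl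
  -- distinctness
  have hab : a ≠ b := by rintro rfl; omega
  have hbc : b ≠ c := by rintro rfl; omega
  have hs_ab : res subset_union_right a ≠ res (T := X₂) subset_union_right b := by
    intro h; exact hab (point_eq hrb.symm h)
  have hac : a ≠ c := by
    rintro rfl; exact hs_ab hrc
  have hr_ca : res subset_union_left c ≠ res (T := X₁) subset_union_left a := by
    intro h
    exact hbc (point_eq (h.trans hrb.symm) hrc).symm
  have hwa : w ≠ a := by
    intro h; exact hr_ca (by rw [← hrw1, h])
  have hwb : w ≠ b := by
    intro h
    apply hs_ab
    calc res subset_union_right a = res subset_union_right w := hrw2.symm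
      _ = res subset_union_right b := by rw [h]
  have hwc : w ≠ c := by
    intro h
    apply hs_ab
    calc res subset_union_right a = res subset_union_right w := hrw2.symm
      _ = res subset_union_right c := by rw [h]
      _ = res subset_union_right b := hrc
  -- the positivity facts in explicit form
  have ha' : 0 < z a - z' a := by simpa [hd] using ha
  have hb' : z b - z' b < 0 := by simpa [hd] using hb
  have hc' : 0 < z c - z' c := by simpa [hd] using hc
  -- the new vector
  set z₁ : ZL (X₁ ∪ X₂) := fun u => z u + (if u = b then 1 else 0) + (if u = w then 1 else 0)
      - (if u = a then 1 else 0) - (if u = c then 1 else 0) with hz₁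
  have key2 : ∀ (T : Finset V) (hT : T ⊆ X₁ ∪ X₂),
      (∀ t, (if res hT b = t then (1:ℤ) else 0) + (if res hT w = t then 1 else 0)
          = (if res hT a = t then 1 else 0) + (if res hT c = t then 1 else 0)) →
      projZ hT z = projZ hT z₁ := by
    intro T hT hbal
    funext t
    rw [projZ_apply, projZ_apply]
    have expand : ∀ u, (if res hT u = t then z₁ u else 0)
        = (if res hT u = t then z u else 0)
          + (if res hT u = t then (if u = b then 1 else 0) else 0)
          + (if res hT u = t then (if u = w then 1 else 0) else 0)
          - (if res hT u = t then (if u = a then 1 else 0) else 0)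
          - (if res hT u = t then (if u = c then 1 else 0) else 0) := by
      intro u
      by_cases h : res hT u = t
      · simp only [if_pos h]; rfl
      · simp only [if_neg h]; norm_num
    rw [Finset.sum_congr rfl fun u _ => expand u]
    rw [Finset.sum_sub_distrib, Finset.sum_sub_distrib, Finset.sum_add_distrib,
      Finset.sum_add_distrib]
    rw [sum_filter_single, sum_filter_single, sum_filter_single, sum_filter_single]
    have := hbal t
    omega
  refine ⟨z₁, ?_, ?_, ?_, ?_, ?_⟩
  · -- l1 norm of the move is 4
    have key : ∀ u, |(z₁ - z) u| = (if u = b then (1:ℤ) else 0) + (if u = w then 1 else 0)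
        + (if u = a then 1 else 0) + (if u = c then 1 else 0) := by
      intro u
      have e : (z₁ - z) u = (if u = b then (1:ℤ) else 0) + (if u = w then 1 else 0)
          - (if u = a then 1 else 0) - (if u = c then 1 else 0) := by
        simp only [Pi.sub_apply, hz₁]; ring
      rw [e, Int.abs_eq_natAbs]
      rcases eq_or_ne u b with h1 | h1 <;> rcases eq_or_ne u w with h2 | h2 <;>
        rcases eq_or_ne u a with h3 | h3 <;> rcases eq_or_ne u c with h4 | h4 <;>
        simp only [h1, h2, h3, h4, if_true, if_false,
          if_neg (Ne.symm hwb), if_neg (Ne.symm hab), if_neg hbc, if_neg hwa,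
          if_neg hwb, if_neg hwc, if_neg (Ne.symm hac), if_neg (Ne.symm hwa),
          if_neg (Ne.symm hbc), if_neg (Ne.symm hwc), if_neg hab, if_neg hac,
          ite_self, if_pos rfl] <;>
        omega
    calc l1Z (z₁ - z) = ∑ u, ((if u = b then (1:ℤ) else 0) + (if u = w then 1 else 0)
        + (if u = a then 1 else 0) + (if u = c then 1 else 0)) :=
          Finset.sum_congr rfl fun u _ => key u
      _ = 4 := by
          rw [Finset.sum_add_distrib, Finset.sum_add_distrib, Finset.sum_add_distrib]
          simp [Finset.sum_ite_eq']
  · -- marginal on X₁ preserved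
    refine key2 X₁ subset_union_left fun t => ?_
    rw [hrb, hrw1]
  · -- marginal on X₂ preserved
    refine key2 X₂ subset_union_right fun t => ?_
    rw [hrc, hrw2]
    ring
  · -- l1 distance to z' decreases by at least 2
    have ptwise : ∀ u, |(z₁ - z') u| ≤ |(z - z') u| + ((if u = w then (1:ℤ) else 0)
        - (if u = a then 1 else 0) - (if u = b then 1 else 0) - (if u = c then 1 else 0)) := by
      intro u
      have e : (z₁ - z') u = (z u - z' u) + (if u = b then (1:ℤ) else 0)
          + (if u = w then 1 else 0) - (if u = a then 1 else 0)
          - (if u = c then 1 else 0) := by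
        simp [hz₁]; ring
      have e2 : (z - z') u = z u - z' u := by simp
      rw [e, e2, Int.abs_eq_natAbs, Int.abs_eq_natAbs]
      rcases eq_or_ne u a with h1 | h1
      · rw [if_pos h1, if_neg (h1 ▸ hab : u ≠ b), if_neg (h1 ▸ (Ne.symm hwa) : u ≠ w),
          if_neg (h1 ▸ hac : u ≠ c), h1]
        omega
      · rcases eq_or_ne u b with h2 | h2
        · rw [if_pos h2, if_neg h1, if_neg (h2 ▸ (Ne.symm hwb) : u ≠ w),
            if_neg (h2 ▸ hbc : u ≠ c), h2]
          omega
        · rcases eq_or_ne u c with h3 | h3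
          · rw [if_pos h3, if_neg h1, if_neg h2, if_neg (h3 ▸ (Ne.symm hwc) : u ≠ w), h3]
            omega
          · rcases eq_or_ne u w with h4 | h4
            · rw [if_pos h4, if_neg h1, if_neg h2, if_neg h3]
              omega
            · rw [if_neg h1, if_neg h2, if_neg h3, if_neg h4]
              omega
    have hsum : ∑ u, (|(z - z') u| + ((if u = w then (1:ℤ) else 0)
        - (if u = a then 1 else 0) - (if u = b then 1 else 0) - (if u = c then 1 else 0)))
        = l1Z (z - z') - 2 := by
      rw [Finset.sum_add_distrib]
      have : ∑ u, ((if u = w then (1:ℤ) else 0)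
          - (if u = a then 1 else 0) - (if u = b then 1 else 0) - (if u = c then 1 else 0))
          = -2 := by
        rw [Finset.sum_sub_distrib, Finset.sum_sub_distrib, Finset.sum_sub_distrib]
        simp [Finset.sum_ite_eq']
      rw [this]
      simp [l1Z]
      ring
    have hle : l1Z (z₁ - z') ≤ l1Z (z - z') - 2 := by
      calc l1Z (z₁ - z') ≤ _ := Finset.sum_le_sum fun u _ => ptwise u
        _ = l1Z (z - z') - 2 := hsum
    omega
  · -- nonnegativity is preserved
    intro hz hz' u
    have e : z₁ u = z u + (if u = b then 1 else 0) + (if u = w then 1 else 0)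
        - (if u = a then 1 else 0) - (if u = c then 1 else 0) := by
      simp only [hz₁]
    rw [e]
    have hzu := hz u
    have hz'u := hz' u
    rcases eq_or_ne u a with h1 | h1
    · rw [if_pos h1, if_neg (h1 ▸ hab : u ≠ b), if_neg (h1 ▸ (Ne.symm hwa) : u ≠ w),
        if_neg (h1 ▸ hac : u ≠ c)]
      have := h1 ▸ ha'
      omega
    · rcases eq_or_ne u c with h3 | h3
      · rw [if_pos h3, if_neg h1, if_neg (h3 ▸ (Ne.symm hbc) : u ≠ b),
          if_neg (h3 ▸ (Ne.symm hwc) : u ≠ w)]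
        have := h3 ▸ hc'
        omega
      · rw [if_neg h1, if_neg h3]
        split_ifs <;> omega



lemma glue_main {X₁ X₂ : Finset V} (n : ℕ) :
    ∀ z z' : ZL (X₁ ∪ X₂), (l1Z (z - z')).toNat ≤ n →
    projZ subset_union_left z = projZ subset_union_left z' →
    projZ subset_union_right z = projZ subset_union_right z' →
    ∃ (ℓ : ℕ) (f : Fin (ℓ + 1) → ZL (X₁ ∪ X₂)),
      f 0 = z ∧ f (Fin.last ℓ) = z' ∧
      (∀ k : Fin ℓ,
        l1Z (f k.succ - f k.castSucc) = 4 ∧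
        projZ subset_union_left (f k.castSucc) = projZ subset_union_left (f k.succ) ∧
        projZ subset_union_right (f k.castSucc) = projZ subset_union_right (f k.succ)) ∧
      ((∀ a, 0 ≤ z a) → (∀ a, 0 ≤ z' a) → ∀ k a, 0 ≤ f k a) := by
  induction n with
  | zero =>
    intro z z' hle h1 h2
    have hzz : z = z' := eq_of_l1Z_nonpos (by omega)
    subst hzz
    exact ⟨0, fun _ => z, rfl, rfl, fun k => k.elim0, fun hz _ _ a => hz a⟩
  | succ n ih =>
    intro z z' hle h1 h2
    by_cases hzz : z = z'
    · subst hzz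
      exact ⟨0, fun _ => z, rfl, rfl, fun k => k.elim0, fun hz _ _ a => hz a⟩
    · obtain ⟨z₁, hnorm, hp1, hp2, hdec, hnn⟩ := step_lemma z z' h1 h2 hzz
      have h0 : 0 ≤ l1Z (z₁ - z') := l1Z_nonneg _
      have hle' : (l1Z (z₁ - z')).toNat ≤ n := by omega
      obtain ⟨ℓ, g, hg0, hgl, hstep, hgnn⟩ := ih z₁ z' hle'
        (hp1.symm.trans h1) (hp2.symm.trans h2)
      refine ⟨ℓ + 1, Fin.cases z g, by simp, ?_, ?_, ?_⟩
      · show (Fin.cases z g ((Fin.last ℓ).succ) : ZL (X₁ ∪ X₂)) = z'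
        rw [Fin.cases_succ]
        exact hgl
      · intro k
        induction k using Fin.cases with
        | zero =>
          have e0 : (Fin.cases z g : Fin (ℓ + 2) → ZL (X₁ ∪ X₂)) ((0 : Fin (ℓ+1)).castSucc) = z := by
            simp
          have e1 : (Fin.cases z g : Fin (ℓ + 2) → ZL (X₁ ∪ X₂)) ((0 : Fin (ℓ+1)).succ) = g 0 :=
            Fin.cases_succ (motive := fun _ => ZL (X₁ ∪ X₂)) 0
          rw [e0, e1, hg0]
          exact ⟨hnorm, hp1, hp2⟩
        | succ j =>
          have e0 : (Fin.cases z g : Fin (ℓ + 2) → ZL (X₁ ∪ X₂)) (j.succ.castSucc) = g j.castSucc :=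
            Fin.cases_succ (motive := fun _ => ZL (X₁ ∪ X₂)) j.castSucc
          have e1 : (Fin.cases z g : Fin (ℓ + 2) → ZL (X₁ ∪ X₂)) (j.succ.succ) = g j.succ :=
            Fin.cases_succ (motive := fun _ => ZL (X₁ ∪ X₂)) j.succ
          rw [e0, e1]
          exact hstep j
      · intro hz hz' k a
        have hz₁ : ∀ u, 0 ≤ z₁ u := hnn hz hz'
        induction k using Fin.cases with
        | zero => simpa using hz a
        | succ j =>
          have e1 : (Fin.cases z g : Fin (ℓ + 2) → ZL (X₁ ∪ X₂)) (j.succ) = g j :=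
            Fin.cases_succ (motive := fun _ => ZL (X₁ ∪ X₂)) j
          rw [e1]
          exact hgnn hz₁ hz' j a

end Helpers

theorem glue_swaps {V : Type} [Fintype V] [DecidableEq V] (X₁ X₂ : Finset V)
    (z z' : ZL (X₁ ∪ X₂))
    (h1 : projZ subset_union_left z = projZ subset_union_left z')
    (h2 : projZ subset_union_right z = projZ subset_union_right z') :
    ∃ (ℓ : ℕ) (f : Fin (ℓ + 1) → ZL (X₁ ∪ X₂)),
      f 0 = z ∧ f (Fin.last ℓ) = z' ∧
      (∀ k : Fin ℓ,
        l1Z (f k.succ - f k.castSucc) = 4 ∧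
        projZ subset_union_left (f k.castSucc) = projZ subset_union_left (f k.succ) ∧
        projZ subset_union_right (f k.castSucc) = projZ subset_union_right (f k.succ)) ∧
      ((∀ a, 0 ≤ z a) → (∀ a, 0 ≤ z' a) → ∀ k a, 0 ≤ f k a) := by
  exact glue_main (l1Z (z - z')).toNat z z' le_rfl h1 h2
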